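/- Let α be a right-maximal repeat of a string w. If two occurrences of α in w overlap with overlap length d (i.e., they start at positions i < j with j < i + |α| and d = i + |α| − j), then no prefix β of α with |β| ≤ d is α-extendable. -/
import Mathlib


open Set List

variable {A : Type*}

/-- `β` occurs in `w` at (0-indexed) position `i`, i.e. `w[i..i+|β|-1] = β`. -/
def OccursAt (w β : List A) (i : ℕ) : Prop := β <+: w.drop i

/-- A repeat of `w`: a nonempty string occurring in `w` at two distinct positions. -/
def IsRepeat (w β : List A) : Prop :=
  β ≠ [] ∧ ∃ i j, i ≠ j ∧ OccursAt w β i ∧ OccursAt w β j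

/-- A right-maximal repeat of `w`: a repeat with two occurrences whose right-adjacent
characters differ.  The right-adjacent character of the occurrence at `i` is
`w[i+|β|]?  : Option A`; the value `none` (an occurrence at the right end of `w`)
plays the role of the special character distinct from all alphabet characters. -/
def IsRMRepeat (w β : List A) : Prop :=
  β ≠ [] ∧ ∃ i j, i ≠ j ∧ OccursAt w β i ∧ OccursAt w β j ∧
    w[i + β.length]? ≠ w[j + β.length]?

/-- `RightExtClosure w β α` says that `α = r(β)`, the right-maximal repeat obtained
from `β` by repeatedly appending the unique common right-adjacent character of all
of its occurrences: equivalently, `α` is a right-maximal repeat of `w` extending `β`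
such that no intermediate extension `γ` (with `β ≤ γ < α`) is already right-maximal. -/
def RightExtClosure (w β α : List A) : Prop :=
  IsRMRepeat w α ∧ β <+: α ∧
    ∀ γ, β <+: γ → γ <+: α → γ ≠ α → ¬ IsRMRepeat w γ

/-- if two occurrences of a right-maximal repeat `α` of `w` overlap with
overlap length `d = i + |α| − j`, then no nonempty prefix `β` of `α` with `|β| ≤ d`
is `α`-extendable. -/
theorem not_extendable_of_overlap (w α : List A) (i j : ℕ)
    (hα : IsRMRepeat w α) (hi : OccursAt w α i) (hj : OccursAt w α j)
    (hij : i < j) (hov : j < i + α.length) :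
    ∀ β, β <+: α → β ≠ [] → β.length ≤ i + α.length - j →
      ¬ RightExtClosure w β α := by
  intro β hβα hβne hβlen hext
  obtain ⟨-, -, hno⟩ := hext
  obtain ⟨hαne, i', j', hij', hi', hj', hch⟩ := hα
  set p := j - i with hp
  set d := i + α.length - j with hd
  have hpd : p + d = α.length := by omega
  have hdpos : 0 < d := by omega
  have hple : p ≤ α.length := by omega
  have hdle : d ≤ α.length := by omega
  have hdroplen : (α.drop p).length = d := by simp; omega
  have htakelen : (α.take d).length = d := by simp; omega
  -- key: α.drop p = α.take d
  have hkey : α.drop p = α.take d := by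
    have h1 : α.drop p <+: w.drop j := by
      obtain ⟨t, ht⟩ := hi
      refine ⟨t, ?_⟩
      rw [show j = i + p by omega, ← List.drop_drop, ← ht,
        List.drop_append_of_le_length hple]
    have h2 : α.take d <+: w.drop j := (List.take_prefix d α).trans hj
    exact (List.prefix_of_prefix_length_le h1 h2 (by omega)).eq_of_length
      (by omega)
  have hocc : ∀ m, α <+: w.drop m → α.take d <+: w.drop (m + p) := by
    intro m hm
    obtain ⟨t, ht⟩ := hm
    rw [← hkey]
    refine ⟨t, ?_⟩
    rw [← List.drop_drop, ← ht,
      List.drop_append_of_le_length hple]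
  have hidx : ∀ m : ℕ, m + p + (α.take d).length = m + α.length := by
    intro m; omega
  refine hno (α.take d) ?_ (List.take_prefix d α) ?_
    ⟨?_, i' + p, j' + p, by omega, hocc i' hi', hocc j' hj', ?_⟩
  · exact List.prefix_of_prefix_length_le hβα (List.take_prefix d α) (by omega)
  · intro h
    have := congrArg List.length h
    rw [htakelen] at this
    omega
  · intro h
    have := congrArg List.length h
    rw [htakelen] at this
    simp at this
    omega
  · rw [hidx i', hidx j']
    exact hch
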